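/- arXiv:2102.11935 — 3 statements merged into one kernel-verified Lean document; each statement's English description precedes it below -/
import Mathlib

section
/- Let f_W(x) = W^L ρ(W^{L-1} ⋯ ρ(W^1 x) ⋯) be an L-layer neural network, fix a layer index N with 1 ≤ N ≤ L−1, and let f_Ŵ(x̂) = W^L ρ(⋯ Ŵ^N ρ(⋯ ρ(W^1 x̂) ⋯) ⋯) denote the network in which only the N-th weight matrix is replaced by Ŵ^N ∈ B_{W^N}(ε_N) and the input by x̂ ∈ B_x(ε_x). Then for every pair of output classes i, j: f^{ij}_{Ŵ}(x̂) ≤ f^{ij}_W(x) + ‖W^L_{i,:} − W^L_{j,:}‖_1 · (∏_{k=1}^{L−N−1} ‖W^{L−k}‖_∞) · ( ε_N ‖z^{N−1}_W(x)‖_1 + ε_x (∏_{m=1}^{N−1} ‖W^m‖_∞)(‖W^N‖_∞ + d_N ε_N) ), where d_N is the number of columns of W^N and empty products equal 1. -/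
/-- Vector ℓ1 norm: `‖v‖₁ = Σ_q |v_q|`. -/
noncomputable def vecL1 {n : ℕ} (v : Fin n → ℝ) : ℝ := ∑ q, |v q|

/-- Vector ℓ∞ norm: `‖v‖_∞ = max_q |v_q|`. -/
noncomputable def vecLinf {n : ℕ} (v : Fin n → ℝ) : ℝ := ⨆ q, |v q|

/-- Matrix ℓ∞→ℓ∞ operator norm: `‖W‖_∞ = max_p Σ_q |W_{p,q}|`. -/
noncomputable def matLinf {m n : ℕ} (W : Matrix (Fin m) (Fin n) ℝ) : ℝ := ⨆ p, ∑ q, |W p q|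

/-- Matrix ℓ1→ℓ1 operator norm: `‖W‖₁ = max_q Σ_p |W_{p,q}|`. -/
noncomputable def matL1 {m n : ℕ} (W : Matrix (Fin m) (Fin n) ℝ) : ℝ := ⨆ q, ∑ p, |W p q|

/-- `zLayer d ρ W k x` is the `k`-th zLayer-layer output
`z^k_W(x) = ρ(W^k ⋯ ρ(W^1 x) ⋯)`, with `z^0_W(x) = x`.
Here `W k` denotes the paper's weight matrix `W^{k+1}`
(so `W : ∀ k, Matrix (Fin (d (k+1))) (Fin (d k)) ℝ` lists `W^1, W^2, …`). -/
noncomputable def zLayer (d : ℕ → ℕ) (ρ : ℝ → ℝ)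
    (W : ∀ k, Matrix (Fin (d (k + 1))) (Fin (d k)) ℝ) :
    (k : ℕ) → (Fin (d 0) → ℝ) → Fin (d k) → ℝ
  | 0, x => x
  | k + 1, x => fun p => ρ ((W k).mulVec (zLayer d ρ W k x) p)

/-- `nnet d ρ W k x = (W^{k+1}) z^k_W(x)` is the output of the `(k+1)`-layer network
`f_W(x) = W^{k+1} ρ(W^k ⋯ ρ(W^1 x) ⋯)`.  In particular `nnet d ρ W (L-1)` is the
paper's `L`-layer network. -/
noncomputable def nnet (d : ℕ → ℕ) (ρ : ℝ → ℝ)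
    (W : ∀ k, Matrix (Fin (d (k + 1))) (Fin (d k)) ℝ) (k : ℕ)
    (x : Fin (d 0) → ℝ) : Fin (d (k + 1)) → ℝ :=
  (W k).mulVec (zLayer d ρ W k x)

lemma vecL1_nonneg {n : ℕ} (v : Fin n → ℝ) : 0 ≤ vecL1 v :=
  Finset.sum_nonneg fun q _ => abs_nonneg _

lemma matLinf_nonneg {m n : ℕ} (W : Matrix (Fin m) (Fin n) ℝ) : 0 ≤ matLinf W :=
  Real.iSup_nonneg fun _ => Finset.sum_nonneg fun _ _ => abs_nonneg _

lemma rowsum_le_matLinf {m n : ℕ} (W : Matrix (Fin m) (Fin n) ℝ) (p : Fin m) :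
    ∑ q, |W p q| ≤ matLinf W :=
  le_ciSup (f := fun p => ∑ q, |W p q|) (Set.Finite.bddAbove (Set.finite_range _)) p

lemma mulVec_diff_bound {m n : ℕ} (W : Matrix (Fin m) (Fin n) ℝ) (u v : Fin n → ℝ)
    {a : ℝ} (ha : 0 ≤ a) (h : ∀ q, |u q - v q| ≤ a) (p : Fin m) :
    |W.mulVec u p - W.mulVec v p| ≤ matLinf W * a := by
  have hEq : W.mulVec u p - W.mulVec v p = ∑ q, W p q * (u q - v q) := by
    simp only [Matrix.mulVec, dotProduct, ← Finset.sum_sub_distrib]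
    exact Finset.sum_congr rfl fun q _ => by ring
  rw [hEq]
  calc |∑ q, W p q * (u q - v q)| ≤ ∑ q, |W p q| * a := by
        refine (Finset.abs_sum_le_sum_abs _ _).trans (Finset.sum_le_sum fun q _ => ?_)
        rw [abs_mul]; exact mul_le_mul_of_nonneg_left (h q) (abs_nonneg _)
    _ = (∑ q, |W p q|) * a := by rw [Finset.sum_mul]
    _ ≤ matLinf W * a := mul_le_mul_of_nonneg_right (rowsum_le_matLinf W p) ha

lemma mulVec_pert_bound {m n : ℕ} (W What : Matrix (Fin m) (Fin n) ℝ) (u v : Fin n → ℝ)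
    {ε a : ℝ} (hε : 0 ≤ ε) (ha : 0 ≤ a)
    (hW : ∀ p q, |What p q - W p q| ≤ ε) (h : ∀ q, |u q - v q| ≤ a) (p : Fin m) :
    |What.mulVec u p - W.mulVec v p| ≤ ε * vecL1 v + (matLinf W + (n : ℝ) * ε) * a := by
  have hEq : What.mulVec u p - W.mulVec v p =
      ∑ q, (What p q * (u q - v q) + (What p q - W p q) * v q) := by
    simp only [Matrix.mulVec, dotProduct, ← Finset.sum_sub_distrib]
    exact Finset.sum_congr rfl fun q _ => by ring
  rw [hEq]
  have hrow : ∑ q, |What p q| ≤ matLinf W + (n : ℝ) * ε := by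
    calc ∑ q, |What p q| ≤ ∑ q, (|W p q| + ε) := by
          refine Finset.sum_le_sum fun q _ => ?_
          have := hW p q
          have := abs_sub_abs_le_abs_sub (What p q) (W p q)
          linarith
      _ = (∑ q, |W p q|) + (n : ℝ) * ε := by
          rw [Finset.sum_add_distrib]; simp [mul_comm]
      _ ≤ matLinf W + (n : ℝ) * ε := by linarith [rowsum_le_matLinf W p]
  calc |∑ q, (What p q * (u q - v q) + (What p q - W p q) * v q)|
      ≤ ∑ q, (|What p q| * a + ε * |v q|) := by
        refine (Finset.abs_sum_le_sum_abs _ _).trans (Finset.sum_le_sum fun q _ => ?_)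
        refine (abs_add_le _ _).trans ?_
        rw [abs_mul, abs_mul]
        exact add_le_add (mul_le_mul_of_nonneg_left (h q) (abs_nonneg _))
          (mul_le_mul_of_nonneg_right (hW p q) (abs_nonneg _))
    _ = (∑ q, |What p q|) * a + ε * (∑ q, |v q|) := by
        rw [Finset.sum_add_distrib, Finset.sum_mul, Finset.mul_sum]
    _ ≤ (matLinf W + (n : ℝ) * ε) * a + ε * vecL1 v := by
        unfold vecL1
        exact add_le_add (mul_le_mul_of_nonneg_right hrow ha) le_rfl
    _ = ε * vecL1 v + (matLinf W + (n : ℝ) * ε) * a := by ring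

/-- Theorem 1, case `N ≠ L`: joint perturbation of the `N`-th weight
matrix and the input, `1 ≤ N ≤ L−1`.

Indexing convention: the Lean matrix `W k` is the paper's `W^{k+1}`, so the paper's
`W^N` is `W (N-1)`, its number of columns `d_N` is `d (N-1)`, the paper's `L`-layer
network is `nnet d ρ W (L-1)`, and `z^{N-1}_W(x) = zLayer d ρ W (N-1) x`.
The paper's products `∏_{k=1}^{L-N-1} ‖W^{L-k}‖_∞ = ∏_{m=N+1}^{L-1} ‖W^m‖_∞` and
`∏_{m=1}^{N-1} ‖W^m‖_∞` become products over the Lean index sets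
`Finset.Ico N (L-1)` and `Finset.range (N-1)` respectively (empty products are 1). -/
theorem statement0
    (d : ℕ → ℕ) (ρ : ℝ → ℝ)
    (hρ_nonneg : ∀ t, 0 ≤ ρ t) (hρ_mono : Monotone ρ)
    (hρ_lip : ∀ s t, |ρ s - ρ t| ≤ |s - t|)
    (L N : ℕ) (hN : 1 ≤ N) (hNL : N + 1 ≤ L)
    (W What : ∀ k, Matrix (Fin (d (k + 1))) (Fin (d k)) ℝ)
    (εN εx : ℝ) (hεN : 0 ≤ εN) (hεx : 0 ≤ εx)
    (hWeq : ∀ k, k ≠ N - 1 → What k = W k)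
    (hWN : ∀ p q, |What (N - 1) p q - W (N - 1) p q| ≤ εN)
    (x xhat : Fin (d 0) → ℝ) (hx : ∀ q, |xhat q - x q| ≤ εx)
    (i j : Fin (d (L - 1 + 1))) :
    nnet d ρ What (L - 1) xhat i - nnet d ρ What (L - 1) xhat j ≤
      (nnet d ρ W (L - 1) x i - nnet d ρ W (L - 1) x j) +
        vecL1 (fun q => W (L - 1) i q - W (L - 1) j q) *
          (∏ k ∈ Finset.Ico N (L - 1), matLinf (W k)) *
          (εN * vecL1 (zLayer d ρ W (N - 1) x) +
            εx * (∏ m ∈ Finset.range (N - 1), matLinf (W m)) *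
              (matLinf (W (N - 1)) + (d (N - 1) : ℝ) * εN)) := by
  obtain ⟨N', rfl⟩ : ∃ N'', N = N'' + 1 := ⟨N - 1, by omega⟩
  obtain ⟨L', rfl⟩ : ∃ L'', L = L'' + 1 := ⟨L - 1, by omega⟩
  simp only [Nat.add_sub_cancel] at hWeq
  have hWN' : ∀ p q, |What N' p q - W N' p q| ≤ εN := hWN
  have hNL' : N' + 1 ≤ L' := by omega
  show nnet d ρ What L' xhat i - nnet d ρ What L' xhat j ≤
      (nnet d ρ W L' x i - nnet d ρ W L' x j) +
        vecL1 (fun q => W L' i q - W L' j q) *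
          (∏ k ∈ Finset.Ico (N' + 1) L', matLinf (W k)) *
          (εN * vecL1 (zLayer d ρ W N' x) +
            εx * (∏ m ∈ Finset.range N', matLinf (W m)) *
              (matLinf (W N') + (d N' : ℝ) * εN))
  have hP : ∀ s : Finset ℕ, (0 : ℝ) ≤ ∏ m ∈ s, matLinf (W m) :=
    fun s => Finset.prod_nonneg fun m _ => matLinf_nonneg _
  -- layers below N: equal matrices
  have h1 : ∀ k, k ≤ N' → ∀ p, |zLayer d ρ What k xhat p - zLayer d ρ W k x p| ≤
      εx * ∏ m ∈ Finset.range k, matLinf (W m) := by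
    intro k
    induction k with
    | zero => intro _ p; simpa [zLayer] using hx p
    | succ k ih =>
      intro hk p
      have ih' := ih (by omega)
      have hWk : What k = W k := hWeq k (by omega)
      show |ρ ((What k).mulVec (zLayer d ρ What k xhat) p) -
            ρ ((W k).mulVec (zLayer d ρ W k x) p)| ≤ _
      calc |ρ ((What k).mulVec (zLayer d ρ What k xhat) p) -
            ρ ((W k).mulVec (zLayer d ρ W k x) p)|
          ≤ |(W k).mulVec (zLayer d ρ What k xhat) p -
             (W k).mulVec (zLayer d ρ W k x) p| := by rw [← hWk]; exact hρ_lip _ _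
        _ ≤ matLinf (W k) * (εx * ∏ m ∈ Finset.range k, matLinf (W m)) :=
            mulVec_diff_bound _ _ _ (mul_nonneg hεx (hP _)) ih' p
        _ = εx * ∏ m ∈ Finset.range (k + 1), matLinf (W m) := by
            rw [Finset.prod_range_succ]; ring
  set C0 : ℝ := εN * vecL1 (zLayer d ρ W N' x) +
      εx * (∏ m ∈ Finset.range N', matLinf (W m)) *
        (matLinf (W N') + (d N' : ℝ) * εN) with hC0
  have hC0nn : 0 ≤ C0 := by
    refine add_nonneg (mul_nonneg hεN (vecL1_nonneg _)) ?_
    refine mul_nonneg (mul_nonneg hεx (hP _)) ?_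
    exact add_nonneg (matLinf_nonneg _) (mul_nonneg (Nat.cast_nonneg _) hεN)
  have h2 : ∀ p, |zLayer d ρ What (N' + 1) xhat p - zLayer d ρ W (N' + 1) x p| ≤ C0 := by
    intro p
    have ha : (0:ℝ) ≤ εx * ∏ m ∈ Finset.range N', matLinf (W m) := mul_nonneg hεx (hP _)
    calc |zLayer d ρ What (N' + 1) xhat p - zLayer d ρ W (N' + 1) x p|
        ≤ |(What N').mulVec (zLayer d ρ What N' xhat) p -
           (W N').mulVec (zLayer d ρ W N' x) p| := hρ_lip _ _
      _ ≤ εN * vecL1 (zLayer d ρ W N' x) +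
          (matLinf (W N') + (d N' : ℝ) * εN) *
            (εx * ∏ m ∈ Finset.range N', matLinf (W m)) :=
          mulVec_pert_bound _ _ _ _ hεN ha hWN' (h1 N' le_rfl) p
      _ = C0 := by rw [hC0]; ring
  have h3 : ∀ k, N' + 1 ≤ k → ∀ p,
      |zLayer d ρ What k xhat p - zLayer d ρ W k x p| ≤
        (∏ m ∈ Finset.Ico (N' + 1) k, matLinf (W m)) * C0 := by
    intro k hk
    induction k, hk using Nat.le_induction with
    | base => intro p; simpa using h2 p
    | succ k hk ih =>
      intro p
      have hWk : What k = W k := hWeq k (by omega)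
      calc |zLayer d ρ What (k + 1) xhat p - zLayer d ρ W (k + 1) x p|
          ≤ |(W k).mulVec (zLayer d ρ What k xhat) p -
             (W k).mulVec (zLayer d ρ W k x) p| := by
            show |ρ _ - ρ _| ≤ _
            rw [← hWk]; exact hρ_lip _ _
        _ ≤ matLinf (W k) * ((∏ m ∈ Finset.Ico (N' + 1) k, matLinf (W m)) * C0) :=
            mulVec_diff_bound _ _ _ (mul_nonneg (hP _) hC0nn) ih p
        _ = (∏ m ∈ Finset.Ico (N' + 1) (k + 1), matLinf (W m)) * C0 := by
            rw [Finset.prod_Ico_succ_top hk]; ring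
  -- final step
  have hWL : What L' = W L' := hWeq L' (by omega)
  have key : ∀ p : Fin (d (L' + 1)),
      nnet d ρ What L' xhat p - nnet d ρ W L' x p =
        ∑ q, W L' p q * (zLayer d ρ What L' xhat q - zLayer d ρ W L' x q) := by
    intro p
    simp only [nnet, hWL, Matrix.mulVec, dotProduct, ← Finset.sum_sub_distrib]
    exact Finset.sum_congr rfl fun q _ => by ring
  have hdiff : (nnet d ρ What L' xhat i - nnet d ρ What L' xhat j) -
      (nnet d ρ W L' x i - nnet d ρ W L' x j) =
      ∑ q, (W L' i q - W L' j q) *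
        (zLayer d ρ What L' xhat q - zLayer d ρ W L' x q) := by
    have hi := key i
    have hj := key j
    rw [show (nnet d ρ What L' xhat i - nnet d ρ What L' xhat j) -
      (nnet d ρ W L' x i - nnet d ρ W L' x j) =
      (nnet d ρ What L' xhat i - nnet d ρ W L' x i) -
      (nnet d ρ What L' xhat j - nnet d ρ W L' x j) by ring, hi, hj,
      ← Finset.sum_sub_distrib]
    congr 1; funext q; ring
  have hbd : ∑ q, (W L' i q - W L' j q) *
        (zLayer d ρ What L' xhat q - zLayer d ρ W L' x q) ≤
      vecL1 (fun q => W L' i q - W L' j q) *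
        (∏ m ∈ Finset.Ico (N' + 1) L', matLinf (W m)) * C0 := by
    have hB : (0:ℝ) ≤ (∏ m ∈ Finset.Ico (N' + 1) L', matLinf (W m)) * C0 :=
      mul_nonneg (hP _) hC0nn
    calc ∑ q, (W L' i q - W L' j q) *
          (zLayer d ρ What L' xhat q - zLayer d ρ W L' x q)
        ≤ ∑ q, |W L' i q - W L' j q| *
            ((∏ m ∈ Finset.Ico (N' + 1) L', matLinf (W m)) * C0) := by
          refine Finset.sum_le_sum fun q _ => ?_
          calc (W L' i q - W L' j q) *
                (zLayer d ρ What L' xhat q - zLayer d ρ W L' x q)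
              ≤ |(W L' i q - W L' j q) *
                (zLayer d ρ What L' xhat q - zLayer d ρ W L' x q)| := le_abs_self _
            _ = |W L' i q - W L' j q| *
                |zLayer d ρ What L' xhat q - zLayer d ρ W L' x q| := abs_mul _ _
            _ ≤ |W L' i q - W L' j q| *
                ((∏ m ∈ Finset.Ico (N' + 1) L', matLinf (W m)) * C0) :=
                mul_le_mul_of_nonneg_left (h3 L' hNL' q) (abs_nonneg _)
      _ = vecL1 (fun q => W L' i q - W L' j q) *
            (∏ m ∈ Finset.Ico (N' + 1) L', matLinf (W m)) * C0 := by
          rw [← Finset.sum_mul]; unfold vecL1; ring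
  linarith [hbd, hdiff]
end

section
/- Let f_W(x) = W^4 ρ(W^3 ρ(W^2 ρ(W^1 x))) be a 4-layer neural network and let f_Ŵ(x) = W^4 ρ(W^3 ρ(Ŵ^2 ρ(W^1 x))) be the network in which only the second weight matrix is replaced by Ŵ^2 ∈ B_{W^2}(ε_2) (input unperturbed). Then for any two output classes c_1, c_2: f^{c_1 c_2}_{Ŵ}(x) − f^{c_1 c_2}_W(x) ≤ ε_2 ‖z^1‖_1 ‖W^3‖_∞ ‖W^4_{c_1,:} − W^4_{c_2,:}‖_1, where z^1 = ρ(W^1 x). -/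
/-- The 4-layer feed-forward network `f_W(x) = W^4 ρ(W^3 ρ(W^2 ρ(W^1 x)))`. -/
noncomputable def net4 {n0 n1 n2 n3 n4 : ℕ}
    (W1 : Matrix (Fin n1) (Fin n0) ℝ) (W2 : Matrix (Fin n2) (Fin n1) ℝ)
    (W3 : Matrix (Fin n3) (Fin n2) ℝ) (W4 : Matrix (Fin n4) (Fin n3) ℝ)
    (ρ : ℝ → ℝ) (x : Fin n0 → ℝ) : Fin n4 → ℝ :=
  W4.mulVec (fun p =>
    ρ (W3.mulVec (fun q =>
      ρ (W2.mulVec (fun r => ρ (W1.mulVec x r)) q)) p))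

private lemma mul_le_abs_mul (a b C : ℝ) (h : |b| ≤ C) : a * b ≤ |a| * C :=
  le_trans (le_abs_self _) (by rw [abs_mul]; exact mul_le_mul_of_nonneg_left h (abs_nonneg _))

/-- for a 4-layer network with only the second weight matrix
perturbed (`Ŵ^2 ∈ B_{W^2}(ε_2)`, input unperturbed), for any output classes `c₁, c₂`:
`f^{c₁c₂}_{Ŵ}(x) − f^{c₁c₂}_W(x) ≤ ε_2 ‖z^1‖_1 ‖W^3‖_∞ ‖W^4_{c₁,:} − W^4_{c₂,:}‖_1`
where `z^1 = ρ(W^1 x)`. -/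
theorem statement7 {n0 n1 n2 n3 n4 : ℕ}
    (W1 : Matrix (Fin n1) (Fin n0) ℝ) (W2 What2 : Matrix (Fin n2) (Fin n1) ℝ)
    (W3 : Matrix (Fin n3) (Fin n2) ℝ) (W4 : Matrix (Fin n4) (Fin n3) ℝ)
    (ρ : ℝ → ℝ) (hρ_nonneg : ∀ t, 0 ≤ ρ t) (hρ_mono : Monotone ρ)
    (hρ_lip : ∀ s t, |ρ s - ρ t| ≤ |s - t|)
    (ε2 : ℝ) (hε2 : 0 ≤ ε2)
    (h2 : ∀ p q, |What2 p q - W2 p q| ≤ ε2)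
    (x : Fin n0 → ℝ) (c1 c2 : Fin n4) :
    (net4 W1 What2 W3 W4 ρ x c1 - net4 W1 What2 W3 W4 ρ x c2) -
        (net4 W1 W2 W3 W4 ρ x c1 - net4 W1 W2 W3 W4 ρ x c2) ≤
      ε2 * vecL1 (fun r => ρ (W1.mulVec x r)) * matLinf W3 *
        vecL1 (fun t => W4 c1 t - W4 c2 t) := by
  classical
  set z1 : Fin n1 → ℝ := fun r => ρ (W1.mulVec x r) with hz1def
  have hz1nonneg : 0 ≤ vecL1 z1 := Finset.sum_nonneg fun i _ => abs_nonneg _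
  -- perturbation bound at layer 2
  have hdz2 : ∀ q, |ρ (What2.mulVec z1 q) - ρ (W2.mulVec z1 q)| ≤ ε2 * vecL1 z1 := by
    intro q
    calc |ρ (What2.mulVec z1 q) - ρ (W2.mulVec z1 q)|
        ≤ |What2.mulVec z1 q - W2.mulVec z1 q| := hρ_lip _ _
      _ = |∑ r, (What2 q r - W2 q r) * z1 r| := by
          simp [Matrix.mulVec, dotProduct, ← Finset.sum_sub_distrib, sub_mul]
      _ ≤ ∑ r, |(What2 q r - W2 q r) * z1 r| := Finset.abs_sum_le_sum_abs _ _
      _ ≤ ∑ r, ε2 * |z1 r| := by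
          refine Finset.sum_le_sum fun r _ => ?_
          rw [abs_mul]
          exact mul_le_mul_of_nonneg_right (h2 q r) (abs_nonneg _)
      _ = ε2 * vecL1 z1 := by rw [vecL1, Finset.mul_sum]
  -- propagate through layer 3
  have hdy : ∀ t : Fin n3,
      |ρ (W3.mulVec (fun q => ρ (What2.mulVec z1 q)) t)
        - ρ (W3.mulVec (fun q => ρ (W2.mulVec z1 q)) t)|
        ≤ matLinf W3 * (ε2 * vecL1 z1) := by
    intro t
    calc |ρ (W3.mulVec (fun q => ρ (What2.mulVec z1 q)) t)
          - ρ (W3.mulVec (fun q => ρ (W2.mulVec z1 q)) t)|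
        ≤ |W3.mulVec (fun q => ρ (What2.mulVec z1 q)) t
            - W3.mulVec (fun q => ρ (W2.mulVec z1 q)) t| := hρ_lip _ _
      _ = |∑ q, W3 t q * (ρ (What2.mulVec z1 q) - ρ (W2.mulVec z1 q))| := by
          simp [Matrix.mulVec, dotProduct, ← Finset.sum_sub_distrib, mul_sub]
      _ ≤ ∑ q, |W3 t q| * |ρ (What2.mulVec z1 q) - ρ (W2.mulVec z1 q)| := by
          refine (Finset.abs_sum_le_sum_abs _ _).trans_eq ?_
          simp [abs_mul]
      _ ≤ ∑ q, |W3 t q| * (ε2 * vecL1 z1) :=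
          Finset.sum_le_sum fun q _ => mul_le_mul_of_nonneg_left (hdz2 q) (abs_nonneg _)
      _ = (∑ q, |W3 t q|) * (ε2 * vecL1 z1) := by rw [Finset.sum_mul]
      _ ≤ matLinf W3 * (ε2 * vecL1 z1) := by
          refine mul_le_mul_of_nonneg_right ?_ (by positivity)
          rw [matLinf]
          exact le_ciSup (Set.Finite.bddAbove
            (Set.finite_range fun p => ∑ q, |W3 p q|)) t
  have hC : 0 ≤ matLinf W3 * (ε2 * vecL1 z1) := by
    have : 0 ≤ matLinf W3 :=
      Real.iSup_nonneg fun p => Finset.sum_nonneg fun q _ => abs_nonneg _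
    positivity
  -- last layer
  have key : (net4 W1 What2 W3 W4 ρ x c1 - net4 W1 What2 W3 W4 ρ x c2) -
      (net4 W1 W2 W3 W4 ρ x c1 - net4 W1 W2 W3 W4 ρ x c2)
      = ∑ t, (W4 c1 t - W4 c2 t) *
          (ρ (W3.mulVec (fun q => ρ (What2.mulVec z1 q)) t)
            - ρ (W3.mulVec (fun q => ρ (W2.mulVec z1 q)) t)) := by
    simp only [net4, hz1def, Matrix.mulVec, dotProduct,
      ← Finset.sum_sub_distrib]
    refine Finset.sum_congr rfl fun t _ => ?_
    ring
  rw [key]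
  calc ∑ t, (W4 c1 t - W4 c2 t) *
          (ρ (W3.mulVec (fun q => ρ (What2.mulVec z1 q)) t)
            - ρ (W3.mulVec (fun q => ρ (W2.mulVec z1 q)) t))
      ≤ ∑ t, |W4 c1 t - W4 c2 t| * (matLinf W3 * (ε2 * vecL1 z1)) := by
        exact Finset.sum_le_sum fun t _ => mul_le_abs_mul _ _ _ (hdy t)
    _ = ε2 * vecL1 z1 * matLinf W3 * vecL1 (fun t => W4 c1 t - W4 c2 t) := by
        simp only [vecL1, ← Finset.sum_mul]
        ring
end

section
/- Let f_W(x) = W^L ρ(W^{L-1} ⋯ ρ(W^1 x) ⋯) be an L-layer neural network with nonnegative activation ρ, and let f_Ŵ(x̂) = Ŵ^L ρ(W^{L−1} ⋯ ρ(W^1 x̂) ⋯) be the network with only the last weight matrix replaced by Ŵ^L ∈ B_{W^L}(ε_L) and the input by x̂ ∈ B_x(ε_x). Then for every pair of output classes i, j: f^{ij}_{Ŵ}(x̂) − f^{ij}_W(x) ≤ ‖W^L_{i,:} − W^L_{j,:}‖_1 ‖z^{L−1}_W(x̂) − z^{L−1}_W(x)‖_∞ + 2 ε_L ‖z^{L−1}_W(x̂)‖_1,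 where z^{L−1}_W(u) = ρ(W^{L−1} ⋯ ρ(W^1 u) ⋯). -/
/-- for an `L`-layer network with nonnegative activation, last
weight matrix replaced by `Ŵ^L ∈ B_{W^L}(ε_L)` and input by `x̂ ∈ B_x(ε_x)`:
`f^{ij}_{Ŵ}(x̂) − f^{ij}_W(x) ≤ ‖W^L_{i,:} − W^L_{j,:}‖_1 ‖z^{L−1}_W(x̂) − z^{L−1}_W(x)‖_∞
  + 2 ε_L ‖z^{L−1}_W(x̂)‖_1`.
(`W k` is the paper's `W^{k+1}`; the perturbed network is
`WhatL.mulVec (zLayer d ρ W (L-1) xhat)` and `z^{L-1}_W = zLayer d ρ W (L-1)`.) -/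
theorem statement11 (d : ℕ → ℕ) (ρ : ℝ → ℝ)
    (hρ_nonneg : ∀ t, 0 ≤ ρ t)
    (L : ℕ) (hL : 1 ≤ L)
    (W : ∀ k, Matrix (Fin (d (k + 1))) (Fin (d k)) ℝ)
    (WhatL : Matrix (Fin (d (L - 1 + 1))) (Fin (d (L - 1))) ℝ)
    (εL εx : ℝ) (hεL : 0 ≤ εL) (hεx : 0 ≤ εx)
    (hWL : ∀ p q, |WhatL p q - W (L - 1) p q| ≤ εL)
    (x xhat : Fin (d 0) → ℝ) (hx : ∀ q, |xhat q - x q| ≤ εx)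
    (i j : Fin (d (L - 1 + 1))) :
    (WhatL.mulVec (zLayer d ρ W (L - 1) xhat) i -
        WhatL.mulVec (zLayer d ρ W (L - 1) xhat) j) -
      (nnet d ρ W (L - 1) x i - nnet d ρ W (L - 1) x j) ≤
    vecL1 (fun q => W (L - 1) i q - W (L - 1) j q) *
        vecLinf (fun p => zLayer d ρ W (L - 1) xhat p - zLayer d ρ W (L - 1) x p) +
      2 * εL * vecL1 (zLayer d ρ W (L - 1) xhat) := by
  set z := zLayer d ρ W (L - 1) x with hz
  set zh := zLayer d ρ W (L - 1) xhat with hzh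
  set A := W (L - 1) with hA
  set M := vecLinf (fun p => zh p - z p) with hM
  have hMle : ∀ q : Fin (d (L - 1)), |zh q - z q| ≤ M := fun q =>
    le_ciSup (f := fun p => |zh p - z p|) (Set.Finite.bddAbove (Set.finite_range _)) q
  have expand :
      (WhatL.mulVec zh i - WhatL.mulVec zh j)
          - (nnet d ρ W (L - 1) x i - nnet d ρ W (L - 1) x j)
        = ∑ q, ((A i q - A j q) * (zh q - z q)
            + ((WhatL i q - A i q) - (WhatL j q - A j q)) * zh q) := by
    simp only [nnet, Matrix.mulVec, dotProduct, ← hz, ← hzh, ← hA,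
      ← Finset.sum_sub_distrib]
    apply Finset.sum_congr rfl
    intro q _
    ring
  rw [expand]
  have step : ∀ q : Fin (d (L - 1)),
      (A i q - A j q) * (zh q - z q)
        + ((WhatL i q - A i q) - (WhatL j q - A j q)) * zh q
      ≤ |A i q - A j q| * M + 2 * εL * |zh q| := by
    intro q
    have h1 : (A i q - A j q) * (zh q - z q) ≤ |A i q - A j q| * M := by
      calc (A i q - A j q) * (zh q - z q) ≤ |(A i q - A j q) * (zh q - z q)| := le_abs_self _
        _ = |A i q - A j q| * |zh q - z q| := abs_mul _ _
        _ ≤ |A i q - A j q| * M := mul_le_mul_of_nonneg_left (hMle q) (abs_nonneg _)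
    have h2 : ((WhatL i q - A i q) - (WhatL j q - A j q)) * zh q ≤ 2 * εL * |zh q| := by
      calc ((WhatL i q - A i q) - (WhatL j q - A j q)) * zh q
          ≤ |((WhatL i q - A i q) - (WhatL j q - A j q)) * zh q| := le_abs_self _
        _ = |(WhatL i q - A i q) - (WhatL j q - A j q)| * |zh q| := abs_mul _ _
        _ ≤ (εL + εL) * |zh q| := by
            apply mul_le_mul_of_nonneg_right _ (abs_nonneg _)
            calc |(WhatL i q - A i q) - (WhatL j q - A j q)|
                ≤ |WhatL i q - A i q| + |WhatL j q - A j q| := abs_sub _ _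
              _ ≤ εL + εL := add_le_add (hWL i q) (hWL j q)
        _ = 2 * εL * |zh q| := by ring
    linarith
  calc ∑ q, ((A i q - A j q) * (zh q - z q)
        + ((WhatL i q - A i q) - (WhatL j q - A j q)) * zh q)
      ≤ ∑ q, (|A i q - A j q| * M + 2 * εL * |zh q|) :=
        Finset.sum_le_sum (fun q _ => step q)
    _ = vecL1 (fun q => A i q - A j q) * M + 2 * εL * vecL1 zh := by
        rw [Finset.sum_add_distrib, ← Finset.sum_mul, ← Finset.mul_sum]
        rfl
end
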